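/- arXiv:0705.0938 — 9 statements merged into one kernel-verified Lean document; each statement's English description precedes it below -/
import Mathlib

section
/- If u,v are twins in a connected graph G, S resolves G, u ∈ S, and v ∉ S, then (S \ {u}) ∪ {v} also resolves G. -/
/-- Two distinct vertices are twins if they have the same open neighbourhood
or the same closed neighbourhood. -/
def Twins {V : Type*} (G : SimpleGraph V) (u v : V) : Prop :=
  u ≠ v ∧ ((∀ x, G.Adj u x ↔ G.Adj v x) ∨ (∀ x, (G.Adj u x ∨ u = x) ↔ (G.Adj v x ∨ v = x)))

/-- `S` resolves `G` if every pair of distinct vertices has different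
distances to some vertex of `S`. -/
def Resolves {V : Type*} (G : SimpleGraph V) (S : Set V) : Prop :=
  ∀ v w : V, v ≠ w → ∃ x ∈ S, G.dist v x ≠ G.dist w x

theorem twin_swap_resolves {V : Type*} (G : SimpleGraph V) (hG : G.Connected)
    (u v : V) (h : Twins G u v) (S : Set V) (hS : Resolves G S)
    (hu : u ∈ S) (hv : v ∉ S) :
    Resolves G ((S \ {u}) ∪ {v}) := by
  classical
  obtain ⟨hne, htw⟩ := h
  -- twins have same adjacencies to other vertices
  have hadj : ∀ b, b ≠ u → b ≠ v → (G.Adj u b ↔ G.Adj v b) := by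
    intro b hbu hbv
    rcases htw with h2 | h2
    · exact h2 b
    · have hb := h2 b
      constructor
      · intro hh
        rcases hb.mp (Or.inl hh) with h' | h'
        · exact h'
        · exact absurd h'.symm hbv
      · intro hh
        rcases hb.mpr (Or.inl hh) with h' | h'
        · exact h'
        · exact absurd h'.symm hbu
  -- the swap of u and v is a graph homomorphism
  have hswap : ∀ a b, G.Adj a b → G.Adj (Equiv.swap u v a) (Equiv.swap u v b) := by
    intro a b hab
    by_cases hau : a = u
    · rw [hau, Equiv.swap_apply_left]
      rw [hau] at hab
      by_cases hbu : b = u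
      · exact absurd (hbu ▸ hab) (G.irrefl)
      by_cases hbv : b = v
      · rw [hbv, Equiv.swap_apply_right]; rw [hbv] at hab; exact hab.symm
      · rw [Equiv.swap_apply_of_ne_of_ne hbu hbv]; exact (hadj b hbu hbv).mp hab
    by_cases hav : a = v
    · rw [hav, Equiv.swap_apply_right]
      rw [hav] at hab
      by_cases hbu : b = u
      · rw [hbu, Equiv.swap_apply_left]; rw [hbu] at hab; exact hab.symm
      by_cases hbv : b = v
      · exact absurd (hbv ▸ hab) (G.irrefl)
      · rw [Equiv.swap_apply_of_ne_of_ne hbu hbv]; exact (hadj b hbu hbv).mpr hab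
    · rw [Equiv.swap_apply_of_ne_of_ne hau hav]
      by_cases hbu : b = u
      · rw [hbu, Equiv.swap_apply_left]; rw [hbu] at hab
        exact ((hadj a hau hav).mp hab.symm).symm
      by_cases hbv : b = v
      · rw [hbv, Equiv.swap_apply_right]; rw [hbv] at hab
        exact ((hadj a hau hav).mpr hab.symm).symm
      · rw [Equiv.swap_apply_of_ne_of_ne hbu hbv]; exact hab
  let f : G →g G := ⟨fun a => Equiv.swap u v a, fun hab => hswap _ _ hab⟩
  -- twins are equidistant from all other vertices
  have hd : ∀ x, x ≠ u → x ≠ v → G.dist u x = G.dist v x := by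
    intro x hxu hxv
    have hfx : f x = x := Equiv.swap_apply_of_ne_of_ne hxu hxv
    have h1 : G.dist u x ≤ G.dist v x := by
      obtain ⟨p, hp⟩ := (hG v x).exists_walk_length_eq_dist
      have := SimpleGraph.dist_le (p.map f)
      rwa [SimpleGraph.Walk.length_map, hp, show f v = u from Equiv.swap_apply_right u v,
        hfx] at this
    have h2 : G.dist v x ≤ G.dist u x := by
      obtain ⟨p, hp⟩ := (hG u x).exists_walk_length_eq_dist
      have := SimpleGraph.dist_le (p.map f)
      rwa [SimpleGraph.Walk.length_map, hp, show f u = v from Equiv.swap_apply_left u v,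
        hfx] at this
    omega
  have dc : ∀ a b : V, G.dist a b = G.dist b a := fun a b => SimpleGraph.dist_comm
  have hvmem : v ∈ (S \ {u}) ∪ {v} := Or.inr rfl
  have hmem : ∀ x, x ∈ S → x ≠ u → x ∈ (S \ {u}) ∪ {v} := fun x hx hxu => Or.inl ⟨hx, hxu⟩
  -- key helper: resolve pairs (u, b) with b ∉ {u, v}
  have key : ∀ b, b ≠ u → b ≠ v → ∃ x ∈ (S \ {u}) ∪ {v}, G.dist u x ≠ G.dist b x := by
    intro b hbu hbv
    obtain ⟨y, hyS, hy⟩ := hS v b (fun h' => hbv h'.symm)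
    have hyv : y ≠ v := fun h' => hv (h' ▸ hyS)
    by_cases hyu : y = u
    · rw [hyu] at hy
      refine ⟨v, hvmem, ?_⟩
      rw [dc u v, dc b v, ← hd b hbu hbv, dc u b]
      exact hy
    · refine ⟨y, hmem y hyS hyu, ?_⟩
      rw [hd y hyu hyv]; exact hy
  have keyv : ∀ b, b ≠ u → b ≠ v → ∃ x ∈ (S \ {u}) ∪ {v}, G.dist v x ≠ G.dist b x := by
    intro b hbu hbv
    obtain ⟨y, hyS, hy⟩ := hS u b (fun h' => hbu h'.symm)
    have hyv : y ≠ v := fun h' => hv (h' ▸ hyS)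
    by_cases hyu : y = u
    · rw [hyu] at hy
      refine ⟨v, hvmem, ?_⟩
      rw [SimpleGraph.dist_self]
      rw [SimpleGraph.dist_self] at hy
      rw [dc b v, ← hd b hbu hbv, dc u b]
      exact hy
    · refine ⟨y, hmem y hyS hyu, ?_⟩
      rw [← hd y hyu hyv]; exact hy
  have huv : ∃ x ∈ (S \ {u}) ∪ {v}, G.dist u x ≠ G.dist v x := by
    refine ⟨v, hvmem, ?_⟩
    rw [SimpleGraph.dist_self]
    have : 0 < G.dist u v := hG.pos_dist_of_ne hne
    omega
  intro a b hab
  by_cases hau : a = u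
  · subst hau
    by_cases hbv : b = v
    · subst hbv; exact huv
    · exact key b (Ne.symm hab) hbv
  by_cases hav : a = v
  · subst hav
    by_cases hbu : b = u
    · subst hbu
      obtain ⟨x, hx, hne'⟩ := huv
      exact ⟨x, hx, hne'.symm⟩
    · exact keyv b hbu (Ne.symm hab)
  by_cases hbu : b = u
  · subst hbu
    obtain ⟨x, hx, hne'⟩ := key a hau hav
    exact ⟨x, hx, hne'.symm⟩
  by_cases hbv : b = v
  · subst hbv
    obtain ⟨x, hx, hne'⟩ := keyv a hau hav
    exact ⟨x, hx, hne'.symm⟩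
  · obtain ⟨y, hyS, hy⟩ := hS a b hab
    have hyv : y ≠ v := fun h' => hv (h' ▸ hyS)
    by_cases hyu : y = u
    · rw [hyu] at hy
      refine ⟨v, hvmem, ?_⟩
      rw [dc a v, ← hd a hau hav, dc u a, dc b v, ← hd b hbu hbv, dc u b]
      exact hy
    · exact ⟨y, hmem y hyS hyu, hy⟩
end

section
/- Let T be a twin-set of cardinality at least 3 in a connected graph G, and u ∈ T. Then the metric dimension satisfies β(G) = β(G \ u) + 1. -/
open scoped Classical

/-- The metric dimension: the minimum cardinality of a resolving set. -/
noncomputable def metricDim {V : Type*} (G : SimpleGraph V) : ℕ :=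
  sInf {n | ∃ S : Set V, Resolves G S ∧ S.ncard = n}

section aux
variable {V : Type*} {G : SimpleGraph V}

lemma twins_symm {u t : V} (h : Twins G u t) : Twins G t u :=
  ⟨h.1.symm, h.2.imp (fun h2 x => (h2 x).symm) (fun h2 x => (h2 x).symm)⟩

lemma twins_adj_trans {u t : V} (h : Twins G u t) {x : V} (hx : x ≠ t) (hadj : G.Adj u x) :
    G.Adj t x := by
  rcases h.2 with h2 | h2
  · exact (h2 x).mp hadj
  · rcases (h2 x).mp (Or.inl hadj) with h3 | h3
    · exact h3
    · exact absurd h3.symm hx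

noncomputable def twinSwap {u t : V} (h : Twins G u t) : G ≃g G where
  toEquiv := Equiv.swap u t
  map_rel_iff' := by
    have key : ∀ a b : V, G.Adj a b → G.Adj (Equiv.swap u t a) (Equiv.swap u t b) := by
      intro a b hab
      have h1 := fun {x} hx hh => twins_adj_trans h (x := x) hx hh
      have h1' := fun {x} hx hh => twins_adj_trans (twins_symm h) (x := x) hx hh
      by_cases ha : a = u
      · subst ha
        by_cases hb : b = t
        · subst hb
          rw [Equiv.swap_apply_left, Equiv.swap_apply_right]
          exact hab.symm
        · rw [Equiv.swap_apply_left, Equiv.swap_apply_of_ne_of_ne hab.ne' hb]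
          exact h1 hb hab
      · by_cases ha' : a = t
        · subst ha'
          by_cases hb : b = u
          · subst hb
            rw [Equiv.swap_apply_right, Equiv.swap_apply_left]
            exact hab.symm
          · rw [Equiv.swap_apply_right, Equiv.swap_apply_of_ne_of_ne hb hab.ne']
            exact h1' hb hab
        · rw [Equiv.swap_apply_of_ne_of_ne ha ha']
          by_cases hb : b = u
          · subst hb
            rw [Equiv.swap_apply_left]
            exact (h1 ha' hab.symm).symm
          · by_cases hb' : b = t
            · subst hb'
              rw [Equiv.swap_apply_right]
              exact (h1' ha hab.symm).symm
            · rw [Equiv.swap_apply_of_ne_of_ne hb hb']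
              exact hab
    intro a b
    constructor
    · intro hh
      have := key _ _ hh
      simpa using this
    · exact key a b

lemma iso_dist_le {W : Type*} {G' : SimpleGraph W} (e : G ≃g G') (a b : V) :
    G'.dist (e a) (e b) ≤ G.dist a b := by
  by_cases hr : G.Reachable a b
  · obtain ⟨p, hp⟩ := hr.exists_walk_length_eq_dist
    calc G'.dist (e a) (e b) ≤ (p.map e.toHom).length := SimpleGraph.dist_le _
      _ = p.length := SimpleGraph.Walk.length_map _ _
      _ = G.dist a b := hp
  · have hr' : ¬ G'.Reachable (e a) (e b) := by
      intro hr'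
      exact hr (by simpa using hr'.map e.symm.toHom)
    have : G'.dist (e a) (e b) = 0 :=
      SimpleGraph.dist_eq_zero_iff_eq_or_not_reachable.mpr (Or.inr hr')
    omega

lemma iso_dist {W : Type*} {G' : SimpleGraph W} (e : G ≃g G') (a b : V) :
    G'.dist (e a) (e b) = G.dist a b := by
  refine le_antisymm (iso_dist_le e a b) ?_
  have := iso_dist_le e.symm (e a) (e b)
  simpa using this

lemma twins_dist {u t : V} (h : Twins G u t) {x : V} (hxu : x ≠ u) (hxt : x ≠ t) :
    G.dist x u = G.dist x t := by
  have h2 := iso_dist (twinSwap h) x u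
  have e1 : (twinSwap h) x = x := Equiv.swap_apply_of_ne_of_ne hxu hxt
  have e2 : (twinSwap h) u = t := Equiv.swap_apply_left u t
  rw [e1, e2] at h2
  exact h2.symm

end aux

section walks
variable {V : Type*} {G : SimpleGraph V}

lemma support_cons_ne {u a b c : V} (hadj : G.Adj a b) (q : G.Walk b c) (ha : a ≠ u)
    (hq : ∀ z ∈ q.support, z ≠ u) : ∀ z ∈ (SimpleGraph.Walk.cons hadj q).support, z ≠ u := by
  intro w hw
  rw [SimpleGraph.Walk.support_cons] at hw
  rcases List.mem_cons.mp hw with hw | hw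
  · exact hw ▸ ha
  · exact hq w hw

lemma exists_avoid_walk {u t : V} (h : Twins G u t) :
    ∀ (n : ℕ) {x y : V} (p : G.Walk x y), p.length ≤ n → x ≠ u → y ≠ u →
      ∃ q : G.Walk x y, (∀ z ∈ q.support, z ≠ u) ∧ q.length ≤ p.length := by
  intro n
  induction n with
  | zero =>
    intro x y p hp hx hy
    cases p with
    | nil => exact ⟨.nil, by simpa using hx, le_rfl⟩
    | cons hadj p' => simp [SimpleGraph.Walk.length_cons] at hp
  | succ n ih =>
    intro x y p hp hx hy
    cases p with
    | nil => exact ⟨.nil, by simpa using hx, le_rfl⟩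
    | cons hadj p' =>
      rename_i z
      by_cases hz : z = u
      · subst z
        cases p' with
        | nil => exact absurd rfl hy
        | cons hadj2 p'' =>
          rename_i z2
          have hz2 : z2 ≠ u := hadj2.ne'
          have hp'' : p''.length ≤ n := by
            simp [SimpleGraph.Walk.length_cons] at hp; omega
          obtain ⟨q'', hq'', hlen⟩ := ih p'' hp'' hz2 hy
          have htu : t ≠ u := h.1.symm
          by_cases hxz : x = z2
          · subst x
            exact ⟨q'', hq'', by simp [SimpleGraph.Walk.length_cons]; omega⟩
          · by_cases hxt : x = t
            · subst x
              have hz2t : z2 ≠ t := fun hh => hxz hh.symm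
              have hadj3 : G.Adj t z2 := twins_adj_trans h hz2t hadj2
              exact ⟨.cons hadj3 q'', support_cons_ne hadj3 q'' htu hq'',
                by simp [SimpleGraph.Walk.length_cons]; omega⟩
            · have hadjxt : G.Adj x t := (twins_adj_trans h hxt hadj.symm).symm
              by_cases hz2t : z2 = t
              · subst z2
                exact ⟨.cons hadjxt q'', support_cons_ne hadjxt q'' hx hq'',
                  by simp [SimpleGraph.Walk.length_cons]; omega⟩
              · have hadj3 : G.Adj t z2 := twins_adj_trans h hz2t hadj2
                exact ⟨.cons hadjxt (.cons hadj3 q''),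
                  support_cons_ne hadjxt _ hx (support_cons_ne hadj3 q'' htu hq''),
                  by simp [SimpleGraph.Walk.length_cons]; omega⟩
      · have hp' : p'.length ≤ n := by
          simp [SimpleGraph.Walk.length_cons] at hp; omega
        obtain ⟨q', hq', hlen⟩ := ih p' hp' hz hy
        exact ⟨.cons hadj q', support_cons_ne hadj q' hx hq',
          by simp [SimpleGraph.Walk.length_cons]; omega⟩

lemma walk_to_induce {u : V} :
    ∀ {x y : V} (q : G.Walk x y), (∀ z ∈ q.support, z ≠ u) → ∀ (hx : x ≠ u) (hy : y ≠ u),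
    ∃ r : (G.induce {v | v ≠ u}).Walk ⟨x, hx⟩ ⟨y, hy⟩, r.length = q.length := by
  intro x y q
  induction q with
  | nil => intro _ hx hy; exact ⟨.nil, rfl⟩
  | cons hadj p ih =>
    rename_i a b c
    intro hq hx hy
    have hb : b ≠ u := hq b (by simp)
    obtain ⟨r, hr⟩ := ih (fun z hz => hq z (by simp [hz])) hb hy
    have hadj' : (G.induce {v | v ≠ u}).Adj ⟨a, hx⟩ ⟨b, hb⟩ := hadj
    exact ⟨.cons hadj' r, by simp [SimpleGraph.Walk.length_cons, hr]⟩

lemma dist_induce {u t : V} (h : Twins G u t) (hG : G.Connected) (a b : {v : V // v ≠ u}) :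
    (G.induce {v | v ≠ u}).dist a b = G.dist a.val b.val := by
  obtain ⟨x, hx⟩ := a; obtain ⟨y, hy⟩ := b
  obtain ⟨p, hp⟩ := hG.exists_walk_length_eq_dist x y
  obtain ⟨q, hq, hql⟩ := exists_avoid_walk h p.length p le_rfl hx hy
  obtain ⟨r, hr⟩ := walk_to_induce q hq hx hy
  apply le_antisymm
  · calc (G.induce {v | v ≠ u}).dist ⟨x, hx⟩ ⟨y, hy⟩ ≤ r.length := SimpleGraph.dist_le r
      _ = q.length := hr
      _ ≤ p.length := hql
      _ = G.dist x y := hp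
  · obtain ⟨r', hr'⟩ := r.reachable.exists_walk_length_eq_dist
    have hd := SimpleGraph.dist_le (r'.map (SimpleGraph.Embedding.induce {v | v ≠ u}).toHom)
    rw [SimpleGraph.Walk.length_map, hr'] at hd
    simpa using hd

end walks

theorem metricDim_delete_twin {V : Type*} [Fintype V] (G : SimpleGraph V) (hG : G.Connected)
    (T : Set V) (hT : ∀ u ∈ T, ∀ v ∈ T, u ≠ v → Twins G u v) (h3 : 3 ≤ T.ncard)
    (u : V) (hu : u ∈ T) :
    metricDim G = metricDim (G.induce {v | v ≠ u}) + 1 := by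
  classical
  -- two twins distinct from u
  have h2 : 1 < (T \ {u}).ncard := by
    have hd : (T \ {u}).ncard = T.ncard - 1 := Set.ncard_diff_singleton_of_mem hu
    omega
  obtain ⟨t1, t2, ht1, ht2, ht12⟩ := (Set.one_lt_ncard_iff).mp h2
  have ht1T : t1 ∈ T := ht1.1
  have ht2T : t2 ∈ T := ht2.1
  have ht1u : t1 ≠ u := by simpa using ht1.2
  have ht2u : t2 ≠ u := by simpa using ht2.2
  have htw1 : Twins G u t1 := hT u hu t1 ht1T (Ne.symm ht1u)
  -- distance facts
  have hdist : ∀ a b : {v : V // v ≠ u},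
      (G.induce {v | v ≠ u}).dist a b = G.dist a.val b.val :=
    fun a b => dist_induce htw1 hG a b
  have twd : ∀ v ∈ T, ∀ w ∈ T, v ≠ w → ∀ x : V, x ≠ v → x ≠ w →
      G.dist x v = G.dist x w :=
    fun v hv w hw hvw x hxv hxw => twins_dist (hT v hv w hw hvw) hxv hxw
  -- the two candidate sets of naturals
  set Gi := G.induce {v | v ≠ u} with hGi
  have hDne : ({n | ∃ S : Set V, Resolves G S ∧ S.ncard = n}).Nonempty := by
    refine ⟨(Set.univ : Set V).ncard, Set.univ, ?_, rfl⟩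
    intro v w hvw
    refine ⟨v, trivial, ?_⟩
    rw [SimpleGraph.dist_self]
    exact (hG.pos_dist_of_ne (Ne.symm hvw)).ne
  have hDine : ({n | ∃ S : Set ↥{v | v ≠ u}, Resolves Gi S ∧ S.ncard = n}).Nonempty := by
    refine ⟨(Set.univ : Set ↥{v | v ≠ u}).ncard, Set.univ, ?_, rfl⟩
    intro v w hvw
    refine ⟨v, trivial, ?_⟩
    rw [hdist, hdist, SimpleGraph.dist_self]
    have : w.val ≠ v.val := fun hh => hvw (Subtype.ext hh.symm)
    exact (hG.pos_dist_of_ne this).ne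
  -- preimage cardinality helper
  have hpre : ∀ A : Set V, u ∉ A →
      ((Subtype.val ⁻¹' A : Set ↥{v | v ≠ u})).ncard = A.ncard := by
    intro A huA
    have himg : Subtype.val '' (Subtype.val ⁻¹' A : Set ↥{v | v ≠ u}) = A := by
      ext v
      constructor
      · rintro ⟨x, hx, rfl⟩; exact hx
      · intro hv
        exact ⟨⟨v, fun hh => huA (hh ▸ hv)⟩, hv, rfl⟩
    rw [← Set.ncard_image_of_injective _ Subtype.val_injective, himg]
  -- upper bound : metricDim G ≤ metricDim Gi + 1
  have hupper : metricDim G ≤ metricDim Gi + 1 := by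
    obtain ⟨Si, hSires, hSicard⟩ := Nat.sInf_mem hDine
    have huim : u ∉ Subtype.val '' Si := by
      rintro ⟨x, _, hx⟩; exact x.2 hx
    have hres : Resolves G ((Subtype.val '' Si) ∪ {u}) := by
      intro v w hvw
      by_cases hv : v = u
      · subst v
        refine ⟨u, Or.inr rfl, ?_⟩
        rw [SimpleGraph.dist_self]
        exact (hG.pos_dist_of_ne (Ne.symm hvw)).ne
      · by_cases hw : w = u
        · subst w
          refine ⟨u, Or.inr rfl, ?_⟩
          rw [SimpleGraph.dist_self]
          exact (hG.pos_dist_of_ne hvw).ne'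
        · obtain ⟨x, hxSi, hxd⟩ := hSires ⟨v, hv⟩ ⟨w, hw⟩
            (fun hh => hvw (congrArg Subtype.val hh))
          refine ⟨x.val, Or.inl ⟨x, hxSi, rfl⟩, ?_⟩
          rw [hdist, hdist] at hxd
          exact hxd
    have hcard : ((Subtype.val '' Si) ∪ {u}).ncard = Si.ncard + 1 := by
      rw [Set.ncard_union_eq (Set.disjoint_singleton_right.mpr huim),
        Set.ncard_singleton, Set.ncard_image_of_injective _ Subtype.val_injective]
    calc metricDim G ≤ Si.ncard + 1 := Nat.sInf_le ⟨_, hres, hcard⟩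
      _ = metricDim Gi + 1 := by rw [hSicard]; rfl
  -- lower bound
  have hlower : metricDim Gi + 1 ≤ metricDim G := by
    obtain ⟨S, hSres, hScard⟩ := Nat.sInf_mem hDne
    -- at most one vertex of T is outside S
    have hsub : ∀ v ∈ T, v ∉ S → ∀ w ∈ T, w ∉ S → v = w := by
      intro v hv hvS w hw hwS
      by_contra hne
      obtain ⟨x, hxS, hxd⟩ := hSres v w hne
      have hxv : x ≠ v := fun hh => hvS (hh ▸ hxS)
      have hxw : x ≠ w := fun hh => hwS (hh ▸ hxS)
      exact hxd ((SimpleGraph.dist_comm).trans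
        ((twd v hv w hw hne x hxv hxw).trans SimpleGraph.dist_comm))
    have hSne : S.Nonempty := by
      obtain ⟨x, hxS, _⟩ := hSres u t1 (Ne.symm ht1u)
      exact ⟨x, hxS⟩
    have hS1 : 1 ≤ S.ncard := (Set.ncard_pos).mpr hSne
    -- key: a resolving set for Gi of size S.ncard - 1
    have hkey : ∃ S' : Set ↥{v | v ≠ u}, Resolves Gi S' ∧ S'.ncard = S.ncard - 1 := by
      by_cases huS : u ∈ S
      · -- use S \ {u}
        obtain ⟨t, htT, htu, htS⟩ : ∃ t, t ∈ T ∧ t ≠ u ∧ t ∈ S := by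
          by_cases hc : t1 ∈ S
          · exact ⟨t1, ht1T, ht1u, hc⟩
          · refine ⟨t2, ht2T, ht2u, ?_⟩
            by_contra hc2
            exact ht12 (hsub t1 ht1T hc t2 ht2T hc2)
        refine ⟨Subtype.val ⁻¹' (S \ {u}), ?_, ?_⟩
        · intro v w hvw
          have hvw' : v.val ≠ w.val := fun hh => hvw (Subtype.ext hh)
          obtain ⟨x, hxS, hxd⟩ := hSres v.val w.val hvw'
          by_cases hxu : x = u
          · subst x
            refine ⟨⟨t, htu⟩, by simp [htS, htu], ?_⟩
            rw [hdist, hdist]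
            by_cases hvt : v.val = t
            · rw [hvt, SimpleGraph.dist_self]
              have : w.val ≠ t := fun hh => hvw' (hvt.trans hh.symm)
              exact (hG.pos_dist_of_ne this).ne
            · by_cases hwt : w.val = t
              · rw [hwt, SimpleGraph.dist_self]
                have : v.val ≠ t := hvt
                exact (hG.pos_dist_of_ne this).ne'
              · have e1 : G.dist v.val u = G.dist v.val t :=
                  twd u hu t htT (Ne.symm htu) v.val v.2 hvt
                have e2 : G.dist w.val u = G.dist w.val t :=
                  twd u hu t htT (Ne.symm htu) w.val w.2 hwt
                rw [← e1, ← e2]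
                exact hxd
          · refine ⟨⟨x, hxu⟩, by simp [hxS, hxu], ?_⟩
            rw [hdist, hdist]
            exact hxd
        · rw [hpre _ (by simp), Set.ncard_diff_singleton_of_mem huS]
      · -- u ∉ S ; then t1, t2 ∈ S ; use S \ {t1}
        have ht1S : t1 ∈ S := by
          by_contra hc
          exact ht1u (hsub t1 ht1T hc u hu huS)
        have ht2S : t2 ∈ S := by
          by_contra hc
          exact ht2u (hsub t2 ht2T hc u hu huS)
        refine ⟨Subtype.val ⁻¹' (S \ {t1}), ?_, ?_⟩
        · intro v w hvw
          have huse : ∀ c : V, c ∈ S → c ≠ t1 → ∀ hcu : c ≠ u,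
              G.dist v.val c ≠ G.dist w.val c →
              ∃ x' ∈ (Subtype.val ⁻¹' (S \ {t1}) : Set ↥{v | v ≠ u}),
                Gi.dist v x' ≠ Gi.dist w x' := by
            intro c hc hct1 hcu hd
            refine ⟨⟨c, hcu⟩, by simp [hc, hct1], ?_⟩
            rw [hdist, hdist]
            exact hd
          have hvw' : v.val ≠ w.val := fun hh => hvw (Subtype.ext hh)
          -- symmetric claim for when one endpoint is t1
          have claim : ∀ a b : V, a ≠ u → b ≠ u → a ≠ b → a = t1 →
              ∃ c, c ∈ S ∧ c ≠ t1 ∧ c ≠ u ∧ G.dist a c ≠ G.dist b c := by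
            intro a b hau hbu hab hat1
            subst a
            obtain ⟨y, hyS, hyd⟩ := hSres u b (Ne.symm hbu)
            have hyu : y ≠ u := fun hh => huS (hh ▸ hyS)
            by_cases hyt1 : y = t1
            · subst y
              -- dist u t1 ≠ dist b t1, and dist u t1 = dist t2 t1
              have e0 : G.dist t1 u = G.dist t1 t2 :=
                twd u hu t2 ht2T (Ne.symm ht2u) t1 ht1u ht12
              have e0' : G.dist u t1 = G.dist t2 t1 := by
                rw [SimpleGraph.dist_comm, e0, SimpleGraph.dist_comm]
              by_cases hbt2 : b = t2
              · refine ⟨t2, ht2S, Ne.symm ht12, ht2u, ?_⟩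
                rw [hbt2, SimpleGraph.dist_self]
                exact (hG.pos_dist_of_ne ht12).ne'
              · have e1 : G.dist b t1 = G.dist b t2 :=
                  twd t1 ht1T t2 ht2T ht12 b (Ne.symm hab) hbt2
                refine ⟨t2, ht2S, Ne.symm ht12, ht2u, ?_⟩
                have hne2 : G.dist t2 t1 ≠ G.dist b t1 := by
                  rw [← e0']; exact hyd
                have goal_eq1 : G.dist t1 t2 = G.dist t2 t1 := SimpleGraph.dist_comm
                rw [goal_eq1, ← e1]
                exact hne2
            · have e1 : G.dist u y = G.dist t1 y := by
                rw [SimpleGraph.dist_comm, twd u hu t1 ht1T (Ne.symm ht1u) y hyu hyt1,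
                  SimpleGraph.dist_comm]
              exact ⟨y, hyS, hyt1, hyu, by rw [← e1]; exact hyd⟩
          obtain ⟨x, hxS, hxd⟩ := hSres v.val w.val hvw'
          by_cases hxt1 : x = t1
          · subst x
            by_cases hvt1 : v.val = t1
            · obtain ⟨c, hcS, hct1, hcu, hcd⟩ := claim v.val w.val v.2 w.2 hvw' hvt1
              exact huse c hcS hct1 hcu hcd
            · by_cases hwt1 : w.val = t1
              · obtain ⟨c, hcS, hct1, hcu, hcd⟩ :=
                  claim w.val v.val w.2 v.2 (Ne.symm hvw') hwt1
                exact huse c hcS hct1 hcu (Ne.symm hcd)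
              · by_cases hvt2 : v.val = t2
                · refine huse t2 ht2S (Ne.symm ht12) ht2u ?_
                  rw [hvt2, SimpleGraph.dist_self]
                  have : w.val ≠ t2 := fun hh => hvw' (hvt2.trans hh.symm)
                  exact (hG.pos_dist_of_ne this).ne
                · by_cases hwt2 : w.val = t2
                  · refine huse t2 ht2S (Ne.symm ht12) ht2u ?_
                    rw [hwt2, SimpleGraph.dist_self]
                    exact (hG.pos_dist_of_ne hvt2).ne'
                  · have e1 : G.dist v.val t1 = G.dist v.val t2 :=
                      twd t1 ht1T t2 ht2T ht12 v.val hvt1 hvt2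
                    have e2 : G.dist w.val t1 = G.dist w.val t2 :=
                      twd t1 ht1T t2 ht2T ht12 w.val hwt1 hwt2
                    exact huse t2 ht2S (Ne.symm ht12) ht2u (by rw [← e1, ← e2]; exact hxd)
          · have hxu : x ≠ u := fun hh => huS (hh ▸ hxS)
            exact huse x hxS hxt1 hxu hxd
        · rw [hpre _ (fun hh => huS hh.1), Set.ncard_diff_singleton_of_mem ht1S]
    obtain ⟨S', hS'res, hS'card⟩ := hkey
    have hle : metricDim Gi ≤ S.ncard - 1 := Nat.sInf_le ⟨S', hS'res, hS'card⟩
    have hmG : metricDim G = S.ncard := hScard.symm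
    omega
  omega
end

section
/- Every connected graph G with metric dimension β and diameter D has at least β + D vertices. -/
/-- The diameter: the maximum distance between two vertices. -/
noncomputable def gdiam {V : Type*} (G : SimpleGraph V) : ℕ :=
  sSup {d | ∃ u v : V, G.dist u v = d}

lemma length_takeUntil_eq_indexOf {V : Type*} [DecidableEq V] {G : SimpleGraph V} {v w : V}
    (p : G.Walk v w) (u : V) (h : u ∈ p.support) :
    (p.takeUntil u h).length = p.support.idxOf u := by
  induction p with
  | nil =>
    simp only [SimpleGraph.Walk.mem_support_nil_iff] at h
    subst h
    simp [SimpleGraph.Walk.takeUntil]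
  | @cons a b c r q ih =>
    by_cases hx : a = u
    · subst hx
      simp [SimpleGraph.Walk.takeUntil]
    · have h' : u ∈ q.support := by
        rw [SimpleGraph.Walk.support_cons, List.mem_cons] at h
        rcases h with h1 | h1
        · exact absurd h1.symm hx
        · exact h1
      simp only [SimpleGraph.Walk.takeUntil, dif_neg hx, SimpleGraph.Walk.length_cons,
        SimpleGraph.Walk.support_cons]
      rw [List.idxOf_cons_ne _ hx, ih h']

lemma dist_eq_length_takeUntil {V : Type*} [DecidableEq V] {G : SimpleGraph V}
    (hG : G.Connected) {v w : V}
    (p : G.Walk v w) (hlen : p.length = G.dist v w) (u : V) (h : u ∈ p.support) :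
    G.dist v u = (p.takeUntil u h).length := by
  have h1 : G.dist v u ≤ (p.takeUntil u h).length := SimpleGraph.dist_le _
  have h2 : G.dist u w ≤ (p.dropUntil u h).length := SimpleGraph.dist_le _
  have h3 : (p.takeUntil u h).length + (p.dropUntil u h).length = p.length := by
    rw [← SimpleGraph.Walk.length_append, SimpleGraph.Walk.take_spec]
  have h4 : G.dist v w ≤ G.dist v u + G.dist u w := hG.dist_triangle
  omega

theorem card_ge_metricDim_add_diam {V : Type*} [Fintype V] (G : SimpleGraph V)
    (hG : G.Connected) :
    metricDim G + gdiam G ≤ Fintype.card V := by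
  classical
  have hne : Nonempty V := hG.nonempty
  have hbdd : BddAbove {d | ∃ u v : V, G.dist u v = d} := by
    refine ⟨Fintype.card V, ?_⟩
    rintro d ⟨u, v, rfl⟩
    obtain ⟨p, hp, hlen⟩ := hG.exists_path_of_dist u v
    rw [← hlen]
    exact le_of_lt hp.length_lt
  have hmem : gdiam G ∈ {d | ∃ u v : V, G.dist u v = d} := by
    apply Nat.sSup_mem
    · exact ⟨0, hne.some, hne.some, SimpleGraph.dist_self⟩
    · exact hbdd
  obtain ⟨u, v, hd⟩ := hmem
  obtain ⟨p, hp, hlen⟩ := hG.exists_path_of_dist u v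
  have hlenD : p.length = gdiam G := hlen.trans hd
  set S : Set V := {x | x ∉ p.support.tail} with hS
  have hnodup : p.support.Nodup := hp.support_nodup
  have hsupp : p.support = u :: p.support.tail := p.support_eq_cons
  have huS : u ∈ S := by
    intro hu
    have h0 := hnodup
    rw [hsupp] at h0
    exact (List.nodup_cons.mp h0).1 hu
  have hinj : ∀ x ∈ p.support, ∀ y ∈ p.support, G.dist u x = G.dist u y → x = y := by
    intro x hx y hy hxy
    rw [dist_eq_length_takeUntil hG p hlen x hx,
        dist_eq_length_takeUntil hG p hlen y hy,
        length_takeUntil_eq_indexOf, length_takeUntil_eq_indexOf] at hxy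
    exact (List.idxOf_inj hx).mp hxy
  have hres : Resolves G S := by
    intro x y hxy
    by_cases hx : x ∈ S
    · refine ⟨x, hx, ?_⟩
      rw [SimpleGraph.dist_self]
      exact fun hc => hxy ((hG.dist_eq_zero_iff).mp hc.symm).symm
    · by_cases hy : y ∈ S
      · refine ⟨y, hy, ?_⟩
        rw [SimpleGraph.dist_self]
        exact fun hc => hxy ((hG.dist_eq_zero_iff).mp hc)
      · refine ⟨u, huS, ?_⟩
        simp only [hS, Set.mem_setOf_eq, not_not] at hx hy
        have hxs : x ∈ p.support := by rw [hsupp]; exact List.mem_cons_of_mem _ hx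
        have hys : y ∈ p.support := by rw [hsupp]; exact List.mem_cons_of_mem _ hy
        intro hc
        have hc' : G.dist u x = G.dist u y :=
          (SimpleGraph.dist_comm : G.dist u x = G.dist x u).trans
            (hc.trans (SimpleGraph.dist_comm : G.dist y u = G.dist u y))
        exact hxy (hinj x hxs y hys hc')
  have htail_nodup : p.support.tail.Nodup := by
    rw [hsupp] at hnodup
    exact (List.nodup_cons.mp hnodup).2
  have htail_len : p.support.tail.length = gdiam G := by
    have h1 : p.support.length = p.length + 1 := SimpleGraph.Walk.length_support p
    rw [hsupp, List.length_cons] at h1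
    omega
  have hScard : S.ncard = Fintype.card V - gdiam G := by
    have hSeq : S = (↑(p.support.tail.toFinset)ᶜ : Finset V) := by
      ext x
      simp [hS]
    rw [hSeq, Set.ncard_coe_finset, Finset.card_compl,
      List.toFinset_card_of_nodup htail_nodup, htail_len]
  have hb : metricDim G ≤ Fintype.card V - gdiam G :=
    Nat.sInf_le ⟨S, hres, hScard⟩
  have hD : gdiam G < Fintype.card V := by
    rw [← hlenD]; exact hp.length_lt
  omega
end

section
/- A connected graph G on n ≥ 1 vertices has metric dimension n−1 if and only if G is the complete graph K_n. -/
theorem metricDim_eq_card_sub_one_iff_complete {V : Type*} [Fintype V] [Nonempty V]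
    (G : SimpleGraph V) (hG : G.Connected) :
    metricDim G = Fintype.card V - 1 ↔ G = ⊤ := by
  classical
  constructor
  · intro hdim
    by_contra hne
    -- there are two distinct nonadjacent vertices
    have : ∃ u v : V, u ≠ v ∧ ¬ G.Adj u v := by
      by_contra h
      push_neg at h
      apply hne
      ext a b
      simp only [SimpleGraph.top_adj]
      exact ⟨fun h' => h'.ne, fun h' => h a b h'⟩
    obtain ⟨u, v, huv, hadj⟩ := this
    -- dist u v ≥ 2
    have hd1 : G.dist u v ≠ 1 := fun h => hadj (SimpleGraph.dist_eq_one_iff_adj.mp h)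
    have hd0 : 0 < G.dist u v := hG.pos_dist_of_ne huv
    have hd2 : 2 ≤ G.dist u v := by omega
    obtain ⟨p, hp⟩ := hG.exists_walk_length_eq_dist u v
    -- take the first step of a shortest walk
    cases p with
    | nil => simp at hp; exact absurd rfl huv
    | cons h q =>
      rename_i x
      have hxv : G.dist x v < G.dist u v := by
        have := G.dist_le q
        simp [SimpleGraph.Walk.length_cons] at hp
        omega
      have hux : u ≠ x := h.ne
      have hvu : v ≠ u := huv.symm
      have hvx : v ≠ x := by
        intro hvx; subst hvx; exact hadj h
      set S : Set V := ({u, x} : Set V)ᶜ with hS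
      have hres : Resolves G S := by
        intro a b hab
        by_cases ha : a ∈ S
        · exact ⟨a, ha, by
            rw [SimpleGraph.dist_self]
            exact fun hc => hab ((hG.dist_eq_zero_iff).mp hc.symm).symm⟩
        · by_cases hb : b ∈ S
          · exact ⟨b, hb, by
              rw [SimpleGraph.dist_self]
              exact fun hc => hab ((hG.dist_eq_zero_iff).mp hc)⟩
          · -- a, b ∈ {u, x}, so {a,b} = {u,x}
            simp only [hS, Set.mem_compl_iff, Set.mem_insert_iff, Set.mem_singleton_iff,
              not_not] at ha hb
            have hvS : v ∈ S := by
              simp only [hS, Set.mem_compl_iff, Set.mem_insert_iff, Set.mem_singleton_iff]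
              push_neg
              exact ⟨hvu, hvx⟩
            refine ⟨v, hvS, ?_⟩
            rcases ha with rfl | rfl <;> rcases hb with rfl | rfl <;>
              first | exact absurd rfl hab | omega
      have hcard : S.ncard = Fintype.card V - 2 := by
        rw [hS]
        have h1 : ({u, x} : Set V).ncard = 2 := Set.ncard_pair hux
        have h2 := Set.ncard_add_ncard_compl ({u, x} : Set V)
        have h3 : Nat.card V = Fintype.card V := Nat.card_eq_fintype_card
        omega
      have hmem : Fintype.card V - 2 ∈ {n | ∃ S : Set V, Resolves G S ∧ S.ncard = n} :=
        ⟨S, hres, hcard⟩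
      have hle := Nat.sInf_le hmem
      have hcard2 : 2 ≤ Fintype.card V := by
        have h2 : ({u, x} : Set V).ncard ≤ Set.univ.ncard :=
          Set.ncard_le_ncard (Set.subset_univ _) (Set.finite_univ)
        rw [Set.ncard_pair hux, Set.ncard_univ, Nat.card_eq_fintype_card] at h2
        exact h2
      rw [metricDim] at hdim
      omega
  · intro htop
    subst htop
    have hdist : ∀ a b : V, a ≠ b → (⊤ : SimpleGraph V).dist a b = 1 := by
      intro a b hab
      exact SimpleGraph.dist_eq_one_iff_adj.mpr hab
    obtain ⟨u₀⟩ := ‹Nonempty V›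
    apply le_antisymm
    · -- the complement of a point resolves
      apply Nat.sInf_le
      refine ⟨({u₀} : Set V)ᶜ, ?_, ?_⟩
      · intro a b hab
        by_cases ha : a = u₀
        · subst ha
          refine ⟨b, by simpa using hab.symm, ?_⟩
          rw [SimpleGraph.dist_self, hdist a b hab]
          omega
        · refine ⟨a, by simpa using ha, ?_⟩
          rw [SimpleGraph.dist_self, hdist b a (Ne.symm hab)]
          omega
      · have h2 := Set.ncard_add_ncard_compl ({u₀} : Set V)
        rw [Set.ncard_singleton, Nat.card_eq_fintype_card] at h2
        omega
    · apply le_csInf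
      · exact ⟨Fintype.card V - 1, ({u₀} : Set V)ᶜ, by
          intro a b hab
          by_cases ha : a = u₀
          · subst ha
            refine ⟨b, by simpa using hab.symm, ?_⟩
            rw [SimpleGraph.dist_self, hdist a b hab]
            omega
          · refine ⟨a, by simpa using ha, ?_⟩
            rw [SimpleGraph.dist_self, hdist b a (Ne.symm hab)]
            omega,
          by
          have h2 := Set.ncard_add_ncard_compl ({u₀} : Set V)
          rw [Set.ncard_singleton, Nat.card_eq_fintype_card] at h2
          omega⟩
      · rintro m ⟨S, hres, rfl⟩
        -- the complement of S has at most one element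
        have hsub : Sᶜ.Subsingleton := by
          intro a ha b hb
          by_contra hab
          obtain ⟨x, hx, hdx⟩ := hres a b hab
          have hax : a ≠ x := fun h => ha (h ▸ hx)
          have hbx : b ≠ x := fun h => hb (h ▸ hx)
          rw [hdist a x hax, hdist b x hbx] at hdx
          exact hdx rfl
        have h1 : Sᶜ.ncard ≤ 1 := by
          rcases hsub.eq_empty_or_singleton with h | ⟨a, h⟩
          · simp [h]
          · simp [h]
        have h2 := Set.ncard_add_ncard_compl S
        have h3 : Nat.card V = Fintype.card V := Nat.card_eq_fintype_card
        omega
end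

section
/- Let G be a connected graph that is not K_1, and let G* be its twin graph (the quotient by the equivalence relation 'equal or twins'). Then diam(G*) ≤ diam(G); moreover diam(G*) < diam(G) if and only if G* is a complete graph. In particular, if diam(G) ≥ 3, then diam(G) = diam(G*). -/
/-- The equivalence relation "equal or twins". -/
def twinSetoid {V : Type*} (G : SimpleGraph V) : Setoid V :=
  ⟨fun u v => u = v ∨ Twins G u v, by
    constructor
    · exact fun x => Or.inl rfl
    · rintro x y (rfl | ⟨hne, h⟩)
      · exact Or.inl rfl
      · exact Or.inr ⟨hne.symm, h.imp (fun h x => (h x).symm) (fun h x => (h x).symm)⟩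
    · rintro x y z (rfl | hxy) (rfl | hyz)
      · exact Or.inl rfl
      · exact Or.inr hyz
      · exact Or.inr hxy
      · by_cases hxz : x = z
        · exact Or.inl hxz
        · refine Or.inr ⟨hxz, ?_⟩
          obtain ⟨hxy', ho | hc⟩ := hxy <;> obtain ⟨hyz', ho2 | hc2⟩ := hyz
          · exact Or.inl (fun a => (ho a).trans (ho2 a))
          · exfalso
            have hyzadj : G.Adj y z := by
              rcases (hc2 z).mpr (Or.inr rfl) with h | h
              · exact h
              · exact absurd h hyz'
            have hxy_nadj : ¬ G.Adj x y := fun h => G.loopless.1 y ((ho y).mp h)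
            have hxz_adj : G.Adj x z := (ho z).mpr hyzadj
            rcases (hc2 x).mpr (Or.inl hxz_adj.symm) with h | h
            · exact hxy_nadj h.symm
            · exact hxy' h.symm
          · exfalso
            have hxyadj : G.Adj x y := by
              rcases (hc y).mpr (Or.inr rfl) with h | h
              · exact h
              · exact absurd h hxy'
            have hyz_nadj : ¬ G.Adj y z := fun h => G.loopless.1 z ((ho2 z).mp h)
            have hzx_adj : G.Adj z x := (ho2 x).mp hxyadj.symm
            rcases (hc z).mp (Or.inl hzx_adj.symm) with h | h
            · exact hyz_nadj h
            · exact hyz' h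
          · exact Or.inr (fun a => (hc a).trans (hc2 a))⟩

/-- The twin graph `G*`: the quotient of `G` by the twin relation, two classes
being adjacent iff some (equivalently, every) pair of their members is adjacent. -/
def twinGraph {V : Type*} (G : SimpleGraph V) : SimpleGraph (Quotient (twinSetoid G)) where
  Adj a b := a ≠ b ∧ ∃ u v : V, Quotient.mk (twinSetoid G) u = a ∧
      Quotient.mk (twinSetoid G) v = b ∧ G.Adj u v
  symm := by
    constructor
    rintro a b ⟨hab, u, v, hu, hv, h⟩
    exact ⟨hab.symm, v, u, hv, hu, h.symm⟩
  loopless := by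
    constructor
    rintro a ⟨h, -⟩
    exact h rfl

section Aux
variable {V : Type*} {G : SimpleGraph V}

local notation "mkq" => Quotient.mk (twinSetoid G)

lemma twin_adj_left {u u' v : V} (h : u = u' ∨ Twins G u u') (hadj : G.Adj u' v)
    (hne : mkq u ≠ mkq v) : G.Adj u v := by
  rcases h with rfl | ⟨hne', ho | hc⟩
  · exact hadj
  · exact (ho v).mpr hadj
  · rcases (hc v).mpr (Or.inl hadj) with h | h
    · exact h
    · exact absurd (congrArg _ h) hne

lemma adj_of_twinGraph_adj {u v : V} (h : (twinGraph G).Adj (mkq u) (mkq v)) :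
    G.Adj u v := by
  obtain ⟨hne, u', v', hu', hv', hadj⟩ := h
  have h1 : u = u' ∨ Twins G u u' := Quotient.exact hu'.symm
  have h2 : v = v' ∨ Twins G v v' := Quotient.exact hv'.symm
  have hne' : mkq u ≠ mkq v' := by rw [hv']; exact hne
  have huv' : G.Adj u v' := twin_adj_left h1 hadj hne'
  have hne'' : mkq v ≠ mkq u := fun h => hne h.symm
  exact (twin_adj_left h2 huv'.symm hne'').symm

lemma twinGraph_connected (hG : G.Connected) : (twinGraph G).Connected := by
  have hne : Nonempty (Quotient (twinSetoid G)) := hG.nonempty.map mkq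
  apply SimpleGraph.Connected.mk
  intro a b
  obtain ⟨u, rfl⟩ := Quotient.exists_rep a
  obtain ⟨v, rfl⟩ := Quotient.exists_rep b
  obtain ⟨p⟩ := hG u v
  induction p with
  | nil => exact SimpleGraph.Reachable.refl _
  | @cons x y z h p ih =>
    by_cases heq : mkq x = mkq y
    · rw [heq]; exact ih
    · have hA : (twinGraph G).Adj (mkq x) (mkq y) := ⟨heq, x, y, rfl, rfl, h⟩
      exact hA.reachable.trans ih

lemma dist_quot_le (hG : G.Connected) {u v : V} (p : G.Walk u v) :
    (twinGraph G).dist (mkq u) (mkq v) ≤ p.length := by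
  induction p with
  | nil => simp
  | @cons x y z h p ih =>
    by_cases heq : mkq x = mkq y
    · rw [heq]; exact ih.trans (by simp)
    · have h1 : (twinGraph G).dist (mkq x) (mkq y) = 1 :=
        SimpleGraph.dist_eq_one_iff_adj.mpr ⟨heq, x, y, rfl, rfl, h⟩
      calc (twinGraph G).dist (mkq x) (mkq z)
          ≤ (twinGraph G).dist (mkq x) (mkq y) + (twinGraph G).dist (mkq y) (mkq z) :=
            (twinGraph_connected hG).dist_triangle
        _ ≤ 1 + p.length := by rw [h1]; exact Nat.add_le_add_left ih 1
        _ = (p.cons h).length := by simp [Nat.add_comm]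

lemma dist_le_quot (hG : G.Connected) {a b : Quotient (twinSetoid G)}
    (p : (twinGraph G).Walk a b) :
    ∀ {u v : V}, mkq u = a → mkq v = b → a ≠ b → G.dist u v ≤ p.length := by
  induction p with
  | nil => intro u v hu hv hab; exact absurd rfl hab
  | @cons a c b h p ih =>
    intro u v hu hv hab
    by_cases hcb : c = b
    · subst hcb
      have hadj : G.Adj u v := by
        apply adj_of_twinGraph_adj; rw [hu, hv]; exact h
      have h1 := SimpleGraph.dist_eq_one_iff_adj.mpr hadj
      simp only [SimpleGraph.Walk.length_cons]
      omega
    · obtain ⟨w, hw⟩ := Quotient.exists_rep c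
      have hadj : G.Adj u w := by
        apply adj_of_twinGraph_adj; rw [hu, hw]; exact h
      have h2 : G.dist w v ≤ p.length := ih hw hv hcb
      calc G.dist u v ≤ G.dist u w + G.dist w v := hG.dist_triangle
        _ ≤ 1 + p.length := by
            have := SimpleGraph.dist_eq_one_iff_adj.mpr hadj
            omega
        _ = (p.cons h).length := by simp [Nat.add_comm]

lemma twin_dist_le_two (hG : G.Connected) (hV : Nontrivial V) {u v : V}
    (h : mkq u = mkq v) : G.dist u v ≤ 2 := by
  rcases (Quotient.exact h : u = v ∨ Twins G u v) with rfl | ⟨hne, ho | hc⟩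
  · simp [SimpleGraph.dist_self]
  · obtain ⟨y, hy⟩ := exists_ne u
    obtain ⟨p⟩ := hG u y
    cases p with
    | nil => exact absurd rfl hy.symm
    | @cons _ w _ h' p' =>
      have hvw : G.Adj v w := (ho w).mp h'
      calc G.dist u v ≤ G.dist u w + G.dist w v := hG.dist_triangle
        _ ≤ 2 := by
            have h1 := SimpleGraph.dist_eq_one_iff_adj.mpr h'
            have h2 := SimpleGraph.dist_eq_one_iff_adj.mpr hvw.symm
            omega
  · have hadj : G.Adj u v := by
      rcases (hc v).mpr (Or.inr rfl) with h | h
      · exact h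
      · exact absurd h hne
    have := SimpleGraph.dist_eq_one_iff_adj.mpr hadj
    omega

lemma gdiam_bdd {W : Type*} [Finite W] (H : SimpleGraph W) :
    BddAbove {d | ∃ u v : W, H.dist u v = d} := by
  apply Set.Finite.bddAbove
  apply Set.Finite.subset (Set.finite_range fun p : W × W => H.dist p.1 p.2)
  rintro d ⟨u, v, h⟩
  exact ⟨(u, v), h⟩

lemma dist_le_gdiam {W : Type*} [Finite W] (H : SimpleGraph W) (u v : W) :
    H.dist u v ≤ gdiam H :=
  le_csSup (gdiam_bdd H) ⟨u, v, rfl⟩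

lemma exists_dist_eq_gdiam {W : Type*} [Finite W] [Nonempty W] (H : SimpleGraph W) :
    ∃ u v : W, H.dist u v = gdiam H := by
  have hs : {d | ∃ u v : W, H.dist u v = d}.Nonempty :=
    ⟨0, Classical.arbitrary W, Classical.arbitrary W, SimpleGraph.dist_self⟩
  exact Nat.sSup_mem hs (gdiam_bdd H)

end Aux

theorem twinGraph_diam {V : Type*} [Fintype V] (G : SimpleGraph V) (hG : G.Connected)
    (hV : Nontrivial V) :
    gdiam (twinGraph G) ≤ gdiam G ∧
    (gdiam (twinGraph G) < gdiam G ↔ twinGraph G = ⊤) ∧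
    (3 ≤ gdiam G → gdiam G = gdiam (twinGraph G)) := by
  classical
  have hQconn := twinGraph_connected hG
  haveI hVne : Nonempty V := hG.nonempty
  haveI hQne : Nonempty (Quotient (twinSetoid G)) := hVne.map (Quotient.mk _)
  have push : ∀ u v : V, (twinGraph G).dist (Quotient.mk (twinSetoid G) u)
      (Quotient.mk (twinSetoid G) v) ≤ G.dist u v := by
    intro u v
    obtain ⟨p, hp⟩ := hG.exists_walk_length_eq_dist u v
    exact hp ▸ dist_quot_le hG p
  have lift : ∀ u v : V, Quotient.mk (twinSetoid G) u ≠ Quotient.mk (twinSetoid G) v →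
      G.dist u v ≤ (twinGraph G).dist (Quotient.mk (twinSetoid G) u)
        (Quotient.mk (twinSetoid G) v) := by
    intro u v hne
    obtain ⟨p, hp⟩ := hQconn.exists_walk_length_eq_dist
      (Quotient.mk (twinSetoid G) u) (Quotient.mk (twinSetoid G) v)
    exact hp ▸ dist_le_quot hG p rfl rfl hne
  have part1 : gdiam (twinGraph G) ≤ gdiam G := by
    apply csSup_le
    · exact ⟨0, Classical.arbitrary _, Classical.arbitrary _, SimpleGraph.dist_self⟩
    · rintro d ⟨a, b, rfl⟩
      obtain ⟨u, rfl⟩ := Quotient.exists_rep a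
      obtain ⟨v, rfl⟩ := Quotient.exists_rep b
      exact (push u v).trans (dist_le_gdiam G u v)
  have hD1 : 1 ≤ gdiam G := by
    obtain ⟨u, v, huv⟩ := exists_pair_ne V
    have h1 := hG.pos_dist_of_ne huv
    have h2 := dist_le_gdiam G u v
    omega
  have part2 : gdiam (twinGraph G) < gdiam G ↔ twinGraph G = ⊤ := by
    constructor
    · intro hlt
      obtain ⟨u, v, huv⟩ := exists_dist_eq_gdiam G
      have htw : Quotient.mk (twinSetoid G) u = Quotient.mk (twinSetoid G) v := by
        by_contra hne
        have h1 := (lift u v hne).trans (dist_le_gdiam (twinGraph G) _ _)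
        omega
      have hD2 : gdiam G ≤ 2 := huv ▸ twin_dist_le_two hG hV htw
      have hDq : gdiam (twinGraph G) ≤ 1 := by omega
      ext a b
      simp only [SimpleGraph.top_adj]
      constructor
      · exact fun h => h.ne
      · intro hab
        have hpos := hQconn.pos_dist_of_ne hab
        have hle := (dist_le_gdiam (twinGraph G) a b).trans hDq
        exact SimpleGraph.dist_eq_one_iff_adj.mp (by omega)
    · intro htop
      have hQle : gdiam (twinGraph G) ≤ 1 := by
        obtain ⟨a, b, hab⟩ := exists_dist_eq_gdiam (twinGraph G)
        by_cases h : a = b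
        · subst h; rw [SimpleGraph.dist_self] at hab; omega
        · have hadj : (twinGraph G).Adj a b := by
            rw [htop]; simp only [SimpleGraph.top_adj]; exact h
          rw [SimpleGraph.dist_eq_one_iff_adj.mpr hadj] at hab; omega
      by_cases hall : ∀ u v : V, Quotient.mk (twinSetoid G) u = Quotient.mk (twinSetoid G) v
      · have hQ0 : gdiam (twinGraph G) = 0 := by
          obtain ⟨a, b, hab⟩ := exists_dist_eq_gdiam (twinGraph G)
          obtain ⟨u, rfl⟩ := Quotient.exists_rep a
          obtain ⟨v, rfl⟩ := Quotient.exists_rep b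
          rw [← hab, hall u v, SimpleGraph.dist_self]
        omega
      · push_neg at hall
        obtain ⟨u, v, hne⟩ := hall
        have hD2 : 2 ≤ gdiam G := by
          by_contra hle
          push_neg at hle
          apply hne
          apply Quotient.sound
          by_cases huv : u = v
          · exact Or.inl huv
          · have hcomp : ∀ a b : V, a ≠ b → G.Adj a b := by
              intro a b hab
              have h1 := hG.pos_dist_of_ne hab
              have h2 := dist_le_gdiam G a b
              exact SimpleGraph.dist_eq_one_iff_adj.mp (by omega)
            refine Or.inr ⟨huv, Or.inr fun x => ?_⟩
            constructor
            · intro _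
              by_cases hvx : v = x
              · exact Or.inr hvx
              · exact Or.inl (hcomp v x hvx)
            · intro _
              by_cases hux : u = x
              · exact Or.inr hux
              · exact Or.inl (hcomp u x hux)
        omega
  refine ⟨part1, part2, ?_⟩
  intro h3
  obtain ⟨u, v, huv⟩ := exists_dist_eq_gdiam G
  have hne : Quotient.mk (twinSetoid G) u ≠ Quotient.mk (twinSetoid G) v := by
    intro h
    have := twin_dist_le_two hG hV h
    omega
  have h1 := (lift u v hne).trans (dist_le_gdiam (twinGraph G) _ _)
  have h2 := part1
  omega
end

section
/- Every connected graph with diameter D and metric dimension β has at most D^β + β vertices. -/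
theorem card_le_diam_pow_dim_add_dim {V : Type*} [Fintype V] (G : SimpleGraph V)
    (hG : G.Connected) (D β : ℕ) (hD : gdiam G = D) (hβ : metricDim G = β) :
    Fintype.card V ≤ D ^ β + β := by
  classical
  have hone : 1 ≤ D ^ β + β := by
    rcases Nat.eq_zero_or_pos β with h | h
    · simp [h]
    · omega
  by_cases htriv : Fintype.card V ≤ 1
  · omega
  -- nontrivial case
  push_neg at htriv
  have hVne : Nonempty V := Fintype.card_pos_iff.mp (by omega)
  obtain ⟨u0, v0, huv⟩ := Fintype.exists_pair_of_one_lt_card htriv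
  -- the distance set is bounded above
  have hset : {d | ∃ u v : V, G.dist u v = d} =
      Set.range (fun p : V × V => G.dist p.1 p.2) := by
    ext d; constructor
    · rintro ⟨u, v, rfl⟩; exact ⟨(u, v), rfl⟩
    · rintro ⟨⟨u, v⟩, rfl⟩; exact ⟨u, v, rfl⟩
  have hBdd : BddAbove {d | ∃ u v : V, G.dist u v = d} := by
    rw [hset]; exact (Set.finite_range _).bddAbove
  have hdist_le : ∀ u v : V, G.dist u v ≤ D := by
    intro u v
    rw [← hD]
    exact le_csSup hBdd ⟨u, v, rfl⟩
  have hDpos : 1 ≤ D := by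
    have := hG.pos_dist_of_ne huv
    have := hdist_le u0 v0
    omega
  -- obtain a resolving set of size β
  have hmem : β ∈ {n | ∃ S : Set V, Resolves G S ∧ S.ncard = n} := by
    rw [← hβ]
    apply Nat.sInf_mem
    refine ⟨Fintype.card V, Set.univ, ?_, by rw [Set.ncard_univ]; exact Nat.card_eq_fintype_card⟩
    intro v w hvw
    refine ⟨v, Set.mem_univ v, ?_⟩
    rw [G.dist_self]
    have := hG.pos_dist_of_ne (Ne.symm hvw)
    omega
  obtain ⟨S, hS, hScard⟩ := hmem
  -- inject the complement of S into functions S → Fin D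
  have hinj : ∃ f : (↥Sᶜ) → (↥S → Fin D), Function.Injective f := by
    refine ⟨fun v x => ⟨G.dist v.1 x.1 - 1, ?_⟩, ?_⟩
    · have h1 : 1 ≤ G.dist v.1 x.1 := by
        apply hG.pos_dist_of_ne
        intro h; exact v.2 (h ▸ x.2)
      have h2 := hdist_le v.1 x.1
      omega
    · intro v w hvw
      by_contra hne
      have hne' : (v : V) ≠ (w : V) := fun h => hne (Subtype.ext h)
      obtain ⟨x, hxS, hx⟩ := hS v.1 w.1 hne'
      have h1 : 1 ≤ G.dist v.1 x := by
        apply hG.pos_dist_of_ne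
        intro h; exact v.2 (h ▸ hxS)
      have h2 : 1 ≤ G.dist w.1 x := by
        apply hG.pos_dist_of_ne
        intro h; exact w.2 (h ▸ hxS)
      have := congrFun hvw ⟨x, hxS⟩
      have := congrArg Fin.val this
      simp only at this
      omega
  obtain ⟨f, hf⟩ := hinj
  have hcard1 : Fintype.card (↥Sᶜ) ≤ D ^ β := by
    calc Fintype.card (↥Sᶜ) ≤ Fintype.card (↥S → Fin D) :=
          Fintype.card_le_of_injective f hf
      _ = D ^ Fintype.card ↥S := by simp [Fintype.card_fun]
      _ = D ^ β := by
          congr 1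
          rw [← hScard, Set.ncard_eq_toFinset_card', Set.toFinset_card]
  have hcard2 : Fintype.card ↥S = β := by
    rw [← hScard, Set.ncard_eq_toFinset_card', Set.toFinset_card]
  have hsplit : Fintype.card ↥S + Fintype.card (↥Sᶜ) = Fintype.card V := by
    have := Set.ncard_add_ncard_compl S
    rw [Set.ncard_eq_toFinset_card', Set.toFinset_card,
      Set.ncard_eq_toFinset_card', Set.toFinset_card, Nat.card_eq_fintype_card] at this
    exact this
  have hle : Fintype.card ↥S ≤ Fintype.card V := by
    simpa using Fintype.card_le_of_injective (Subtype.val : ↥S → V) Subtype.val_injective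
  omega
end

section
/- Every connected graph with diameter D ≥ 2 and metric dimension β ≥ 1 has at most (⌊2D/3⌋ + 1)^β + β · Σ_{i=1}^{⌈D/3⌉} (2i−1)^{β−1} vertices. -/
/-- Note `2 * D / 3 = ⌊2D/3⌋` and `(D + 2) / 3 = ⌈D/3⌉` in natural-number arithmetic. -/
theorem card_le_maxOrder {V : Type*} [Fintype V] (G : SimpleGraph V)
    (hG : G.Connected) (D β : ℕ) (hD : 2 ≤ D) (hβ : 1 ≤ β)
    (hdiam : gdiam G = D) (hdim : metricDim G = β) :
    Fintype.card V ≤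
      (2 * D / 3 + 1) ^ β + β * ∑ i ∈ Finset.Icc 1 ((D + 2) / 3), (2 * i - 1) ^ (β - 1) := by
  classical
  -- obtain a resolving set of size β
  have hne : {n | ∃ S : Set V, Resolves G S ∧ S.ncard = n}.Nonempty := by
    by_contra h
    rw [Set.not_nonempty_iff_eq_empty] at h
    rw [metricDim, h, Nat.sInf_empty] at hdim
    omega
  obtain ⟨S, hres, hScard⟩ : ∃ S : Set V, Resolves G S ∧ S.ncard = β := by
    have := Nat.sInf_mem hne
    rw [← metricDim, hdim] at this
    exact this
  -- all distances are at most D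
  have hdistle : ∀ u v : V, G.dist u v ≤ D := by
    intro u v
    rw [← hdiam, gdiam]
    apply le_csSup
    · have heq : {d | ∃ u v : V, G.dist u v = d}
          = Set.range (fun p : V × V => G.dist p.1 p.2) := by
        ext d; simp [eq_comm]
      rw [heq]
      exact (Set.finite_range _).bddAbove
    · exact ⟨u, v, rfl⟩
  have htri : ∀ u v w : V, G.dist u w ≤ G.dist u v + G.dist v w :=
    fun u v w => hG.dist_triangle
  set k : ℕ := (D + 2) / 3 - 1 with hk
  have hSfin : S.Finite := Set.toFinite S
  set S' : Finset V := hSfin.toFinset with hS'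
  have hS'card : S'.card = β := by
    rw [hS', ← Set.ncard_eq_toFinset_card S hSfin, hScard]
  have hS'mem : ∀ x, x ∈ S' ↔ x ∈ S := by
    intro x; rw [hS', Set.Finite.mem_toFinset]
  -- the "far" set
  set A : Finset V := Finset.univ.filter (fun v => ∀ x ∈ S', k + 1 ≤ G.dist v x) with hA
  -- bound on A
  have hAcard : A.card ≤ (D - k) ^ β := by
    have : A.card ≤ (Fintype.piFinset (fun _ : ↥S' => Finset.Icc (k + 1) D)).card := by
      apply Finset.card_le_card_of_injOn (fun v => fun x : ↥S' => G.dist v ↑x)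
      · intro v hv
        rw [hA, Finset.mem_coe, Finset.mem_filter] at hv
        rw [Finset.mem_coe, Fintype.mem_piFinset]
        intro x
        rw [Finset.mem_Icc]
        exact ⟨hv.2 x x.2, hdistle v x⟩
      · intro v _ w _ hvw
        by_contra hne
        obtain ⟨x, hxS, hx⟩ := hres v w hne
        exact hx (congrFun hvw ⟨x, (hS'mem x).2 hxS⟩)
    calc A.card ≤ _ := this
      _ = (D - k) ^ β := by
          rw [Fintype.card_piFinset]
          simp only [Nat.card_Icc]
          rw [Finset.prod_const, Finset.card_univ, Fintype.card_coe, hS'card]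
          congr 1
          omega
  -- layer bound: vertices at distance exactly j from x ∈ S'
  have hlayer : ∀ x ∈ S', ∀ j : ℕ,
      (Finset.univ.filter (fun v => G.dist v x = j)).card ≤ (2 * j + 1) ^ (β - 1) := by
    intro x hx j
    have hinj : (Finset.univ.filter (fun v => G.dist v x = j)).card ≤
        (Fintype.piFinset (fun y : ↥(S'.erase x) =>
          Finset.Icc (G.dist x ↑y - j) (G.dist x ↑y + j))).card := by
      apply Finset.card_le_card_of_injOn (fun v => fun y : ↥(S'.erase x) => G.dist v ↑y)
      · intro v hv
        rw [Finset.mem_coe, Finset.mem_filter] at hv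
        rw [Finset.mem_coe, Fintype.mem_piFinset]
        intro y
        rw [Finset.mem_Icc]
        beta_reduce
        constructor
        · have h1 := htri x v (y : V)
          have h2 : G.dist x v = j := by rw [SimpleGraph.dist_comm]; exact hv.2
          omega
        · have h1 := htri v x (y : V)
          have h2 : G.dist x (y : V) = G.dist (x : V) y := rfl
          rw [hv.2] at h1
          omega
      · intro v hv w hw hvw
        simp only [Finset.mem_coe, Finset.mem_filter] at hv hw
        by_contra hne
        obtain ⟨z, hzS, hz⟩ := hres v w hne
        have hzx : z ≠ x := by
          intro h; subst h; exact hz (hv.2.trans hw.2.symm)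
        have : z ∈ S'.erase x := Finset.mem_erase.2 ⟨hzx, (hS'mem z).2 hzS⟩
        exact hz (congrFun hvw ⟨z, this⟩)
    calc (Finset.univ.filter (fun v => G.dist v x = j)).card ≤ _ := hinj
      _ ≤ (2 * j + 1) ^ (β - 1) := by
          rw [Fintype.card_piFinset]
          calc ∏ y : ↥(S'.erase x), (Finset.Icc (G.dist x ↑y - j) (G.dist x ↑y + j)).card
              ≤ ∏ _y : ↥(S'.erase x), (2 * j + 1) := by
                apply Finset.prod_le_prod
                · intro _ _; exact Nat.zero_le _
                · intro y _
                  rw [Nat.card_Icc]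
                  omega
            _ = (2 * j + 1) ^ (β - 1) := by
                rw [Finset.prod_const, Finset.card_univ, Fintype.card_coe,
                  Finset.card_erase_of_mem hx, hS'card]
  -- ball bound
  have hball : ∀ x ∈ S',
      (Finset.univ.filter (fun v => G.dist v x ≤ k)).card ≤
        ∑ i ∈ Finset.Icc 1 ((D + 2) / 3), (2 * i - 1) ^ (β - 1) := by
    intro x hx
    have hsub : Finset.univ.filter (fun v => G.dist v x ≤ k) ⊆
        (Finset.range (k + 1)).biUnion (fun j => Finset.univ.filter (fun v => G.dist v x = j)) := by
      intro v hv
      rw [Finset.mem_filter] at hv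
      rw [Finset.mem_biUnion]
      exact ⟨G.dist v x, Finset.mem_range.2 (by omega), Finset.mem_filter.2 ⟨Finset.mem_univ _, rfl⟩⟩
    calc (Finset.univ.filter (fun v => G.dist v x ≤ k)).card
        ≤ ((Finset.range (k + 1)).biUnion
            (fun j => Finset.univ.filter (fun v => G.dist v x = j))).card :=
          Finset.card_le_card hsub
      _ ≤ ∑ j ∈ Finset.range (k + 1), (Finset.univ.filter (fun v => G.dist v x = j)).card :=
          Finset.card_biUnion_le
      _ ≤ ∑ j ∈ Finset.range (k + 1), (2 * j + 1) ^ (β - 1) :=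
          Finset.sum_le_sum (fun j _ => hlayer x hx j)
      _ = ∑ i ∈ Finset.Icc 1 ((D + 2) / 3), (2 * i - 1) ^ (β - 1) := by
          rw [show Finset.Icc 1 ((D + 2) / 3) = Finset.Ico 1 (k + 2) by
            rw [show k + 2 = k + 1 + 1 from rfl, Finset.Ico_add_one_right_eq_Icc]; congr 1; omega]
          rw [Finset.sum_Ico_eq_sum_range]
          apply Finset.sum_congr (by congr 1)
          intro j _
          congr 1
          omega
  -- cover
  have hcover : (Finset.univ : Finset V) ⊆
      A ∪ S'.biUnion (fun x => Finset.univ.filter (fun v => G.dist v x ≤ k)) := by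
    intro v _
    rw [Finset.mem_union]
    by_cases h : ∀ x ∈ S', k + 1 ≤ G.dist v x
    · exact Or.inl (by rw [hA, Finset.mem_filter]; exact ⟨Finset.mem_univ _, h⟩)
    · push_neg at h
      obtain ⟨x, hxS, hxk⟩ := h
      exact Or.inr (Finset.mem_biUnion.2 ⟨x, hxS,
        Finset.mem_filter.2 ⟨Finset.mem_univ _, by omega⟩⟩)
  calc Fintype.card V = (Finset.univ : Finset V).card := rfl
    _ ≤ (A ∪ S'.biUnion (fun x => Finset.univ.filter (fun v => G.dist v x ≤ k))).card :=
        Finset.card_le_card hcover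
    _ ≤ A.card + (S'.biUnion (fun x => Finset.univ.filter (fun v => G.dist v x ≤ k))).card :=
        Finset.card_union_le _ _
    _ ≤ A.card + ∑ x ∈ S', (Finset.univ.filter (fun v => G.dist v x ≤ k)).card :=
        Nat.add_le_add_left Finset.card_biUnion_le _
    _ ≤ (D - k) ^ β + ∑ x ∈ S', ∑ i ∈ Finset.Icc 1 ((D + 2) / 3), (2 * i - 1) ^ (β - 1) :=
        Nat.add_le_add hAcard (Finset.sum_le_sum hball)
    _ ≤ (2 * D / 3 + 1) ^ β + β * ∑ i ∈ Finset.Icc 1 ((D + 2) / 3), (2 * i - 1) ^ (β - 1) := by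
        apply Nat.add_le_add
        · exact Nat.pow_le_pow_left (by omega) β
        · rw [Finset.sum_const, hS'card, smul_eq_mul]
end

section
/- Let S be a resolving set of size β in a connected graph G, and let v ∈ S. Then for every i ≥ 0, the number of vertices at distance exactly i from v is at most (2i+1)^{β−1}. -/
theorem sphere_card_le {V : Type*} [Fintype V] (G : SimpleGraph V) (hG : G.Connected)
    (S : Set V) (β : ℕ) (hS : Resolves G S) (hcard : S.ncard = β)
    (v : V) (hv : v ∈ S) (i : ℕ) :
    {w : V | G.dist v w = i}.ncard ≤ (2 * i + 1) ^ (β - 1) := by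
  classical
  set T : Set V := S \ {v} with hT
  have htri : ∀ a b c : V, G.dist a c ≤ G.dist a b + G.dist b c := fun a b c =>
    hG.dist_triangle
  set f : V → (T → Fin (2 * i + 1)) := fun w x =>
    ⟨min (2 * i) (G.dist w x + i - G.dist v x), by omega⟩ with hf
  have hinj : Set.InjOn f {w : V | G.dist v w = i} := by
    intro w hw w' hw' hfe
    simp only [Set.mem_setOf_eq] at hw hw'
    by_contra hne
    obtain ⟨x, hxS, hxd⟩ := hS w w' hne
    have hxv : x ≠ v := fun h => hxd (by
      rw [h, SimpleGraph.dist_comm (G:=G) (u:=w) (v:=v),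
        SimpleGraph.dist_comm (G:=G) (u:=w') (v:=v), hw, hw'])
    have hxT : x ∈ T := ⟨hxS, hxv⟩
    have := congrFun hfe ⟨x, hxT⟩
    simp only [hf, Fin.mk.injEq] at this
    have h1 : G.dist w x ≤ i + G.dist v x := by
      have := htri w v x; rw [SimpleGraph.dist_comm (G:=G) (u:=w) (v:=v), hw] at this; omega
    have h2 : G.dist v x ≤ i + G.dist w x := by
      have := htri v w x; rw [hw] at this; omega
    have h1' : G.dist w' x ≤ i + G.dist v x := by
      have := htri w' v x; rw [SimpleGraph.dist_comm (G:=G) (u:=w') (v:=v), hw'] at this; omega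
    have h2' : G.dist v x ≤ i + G.dist w' x := by
      have := htri v w' x; rw [hw'] at this; omega
    exact hxd (by omega)
  have hle : {w : V | G.dist v w = i}.ncard ≤
      (Set.univ : Set (T → Fin (2 * i + 1))).ncard :=
    Set.ncard_le_ncard_of_injOn f (fun a _ => Set.mem_univ _) hinj (Set.finite_univ)
  have hcardT : T.ncard = β - 1 := by
    rw [hT, Set.ncard_diff_singleton_of_mem hv, hcard]
  have hfin : Fintype T := Set.Finite.fintype (Set.toFinite T)
  calc {w : V | G.dist v w = i}.ncard
      ≤ (Set.univ : Set (T → Fin (2 * i + 1))).ncard := hle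
    _ = Fintype.card (T → Fin (2 * i + 1)) := by
        rw [Set.ncard_univ, Nat.card_eq_fintype_card]
    _ = (2 * i + 1) ^ (Fintype.card T) := by
        rw [Fintype.card_fun, Fintype.card_fin]
    _ = (2 * i + 1) ^ (β - 1) := by
        congr 1
        rw [← hcardT, Set.ncard_eq_toFinset_card']
        simp [Set.toFinset_card]
end

section
/- Let D ≥ 2, β ≥ 1, and define the graph G with vertex set Q ∪ P ⊆ ℤ^β, where A=⌈D/3⌉, B=⌈D/3⌉+⌊D/3⌋, Q = {x : A ≤ x_i ≤ D for all i}, and P = ∪_{i,r} P_{i,r} with P_{i,r} = {x : x_i = r, and x_j ∈ [B−r, B+r] for j ≠ i} for r ∈ [0, A−1], with x,y adjacent iff |x_i − y_i| ≤ 1 for all i and x ≠ y. Then for all vertices x,y of G, dist_G(x,y) = max_i |x_i − y_i|. -/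
/-- `A = ⌈D/3⌉` as an integer. -/
def ceilD3 (D : ℕ) : ℤ := ((D + 2) / 3 : ℕ)

/-- `B = ⌈D/3⌉ + ⌊D/3⌋` as an integer. -/
def BD (D : ℕ) : ℤ := ceilD3 D + (D / 3 : ℕ)

/-- Membership in `Q`: all coordinates lie in `[A, D]`. -/
def memQ (D : ℕ) {β : ℕ} (x : Fin β → ℤ) : Prop :=
  ∀ i, ceilD3 D ≤ x i ∧ x i ≤ (D : ℤ)

/-- Membership in `P`: for some coordinate `i` and some `r ∈ [0, A−1]`,
`x i = r` and all other coordinates lie in `[B − r, B + r]`. -/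
def memP (D : ℕ) {β : ℕ} (x : Fin β → ℤ) : Prop :=
  ∃ i : Fin β, ∃ r : ℕ, (r : ℤ) < ceilD3 D ∧ x i = (r : ℤ) ∧
    ∀ j, j ≠ i → BD D - (r : ℤ) ≤ x j ∧ x j ≤ BD D + (r : ℤ)

/-- The vertex set `Q ∪ P ⊆ ℤ^β`. -/
def Vtx (D β : ℕ) : Type := {x : Fin β → ℤ // memQ D x ∨ memP D x}

/-- The graph on `Q ∪ P` where two distinct vertices are adjacent iff all their
coordinates differ by at most `1`. -/
def maxGraph (D β : ℕ) : SimpleGraph (Vtx D β) :=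
  SimpleGraph.fromRel (fun x y => ∀ i, |x.1 i - y.1 i| ≤ 1)


lemma hfacts (D : ℕ) (hD : 2 ≤ D) :
    1 ≤ ceilD3 D ∧ 2 * ceilD3 D - 1 ≤ BD D ∧ BD D ≤ 2 * ceilD3 D ∧
    BD D + ceilD3 D - 1 ≤ (D:ℤ) ∧ (D:ℤ) ≤ BD D + ceilD3 D := by
  unfold BD ceilD3; omega

def stepTo (a b : ℤ) : ℤ := if b < a then a - 1 else if a < b then a + 1 else a

lemma stepTo_cases (a b : ℤ) :
    (stepTo a b = a - 1 ∧ b < a) ∨ (stepTo a b = a + 1 ∧ a < b) ∨ (stepTo a b = a ∧ a = b) := by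
  unfold stepTo; split_ifs <;> omega

lemma key (D β : ℕ) (hD : 2 ≤ D) (x y : Fin β → ℤ)
    (hx : memQ D x ∨ memP D x) (hy : memQ D y ∨ memP D y)
    (n : ℕ) (h1 : ∀ k, (x k - y k).natAbs ≤ n) (hne : x ≠ y) (hn : 1 ≤ n) :
    ∃ z : Fin β → ℤ, (memQ D z ∨ memP D z) ∧ z ≠ x ∧ (∀ k, (z k - x k).natAbs ≤ 1) ∧
      ∀ k, (z k - y k).natAbs < n := by
  obtain ⟨hA, hB1, hB2, hD1, hD2⟩ := hfacts D hD
  set A := ceilD3 D with hAdef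
  set B := BD D with hBdef
  have hmx : ∀ k, (stepTo (x k) (y k) - x k).natAbs ≤ 1 := fun k => by
    have := stepTo_cases (x k) (y k); omega
  have hmy : ∀ k, (stepTo (x k) (y k) - y k).natAbs < n := fun k => by
    have := stepTo_cases (x k) (y k); have := h1 k; omega
  have hmne : (fun k => stepTo (x k) (y k)) ≠ x := by
    intro h
    obtain ⟨k, hk⟩ := Function.ne_iff.1 hne
    have h2 := congrFun h k
    have := stepTo_cases (x k) (y k); omega
  rcases hy with hyQ | ⟨j, s, hs, hyj, hyk⟩
  · refine ⟨fun k => stepTo (x k) (y k), ?_, hmne, hmx, hmy⟩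
    rcases hx with hxQ | ⟨i, r, hr, hxi, hxk⟩
    · left; intro k
      have := stepTo_cases (x k) (y k); have := hxQ k; have := hyQ k
      dsimp only; omega
    · by_cases hcase : (r : ℤ) + 1 < A
      · right
        refine ⟨i, r + 1, by push_cast; omega, ?_, fun k hk => ?_⟩
        · have := stepTo_cases (x i) (y i); have := hyQ i
          dsimp only; push_cast; omega
        · have := hmx k; have := hxk k hk
          dsimp only; push_cast; omega
      · left; intro k
        dsimp only
        by_cases hk : k = i
        · subst hk
          have := stepTo_cases (x k) (y k); have := hyQ k; omega
        · have := stepTo_cases (x k) (y k); have := hxk k hk; have := hyQ k; omega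
  · rcases hx with hxQ | ⟨i, r, hr, hxi, hxk⟩
    · -- x ∈ Q, y ∈ spike j
      have hmk : ∀ k, k ≠ j → A ≤ stepTo (x k) (y k) ∧ stepTo (x k) (y k) ≤ B + A - 1 := by
        intro k hk
        have := stepTo_cases (x k) (y k); have := hxQ k; have := hyk k hk; omega
      have hxjA : A ≤ x j := (hxQ j).1
      by_cases hmj : A ≤ stepTo (x j) (y j)
      · refine ⟨fun k => stepTo (x k) (y k), Or.inl fun k => ?_, hmne, hmx, hmy⟩
        dsimp only
        by_cases hk : k = j
        · subst hk
          have := stepTo_cases (x k) (y k); have := hxQ k; omega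
        · have := hmk k hk; omega
      · by_cases hall : ∀ k, k ≠ j → B - A + 1 ≤ stepTo (x k) (y k)
        · refine ⟨fun k => stepTo (x k) (y k),
            Or.inr ⟨j, (A - 1).toNat, ?_, ?_, fun k hk => ?_⟩, hmne, hmx, hmy⟩
          · omega
          · have := stepTo_cases (x j) (y j); dsimp only; omega
          · have := hall k hk; have := hmk k hk; dsimp only; omega
        · push_neg at hall
          obtain ⟨k0, hk0j, hk0⟩ := hall
          have hc0 := stepTo_cases (x k0) (y k0)
          have hyk0 := hyk k0 hk0j
          refine ⟨fun k => if k = j then x j else stepTo (x k) (y k),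
            Or.inl fun k => ?_, ?_, fun k => ?_, fun k => ?_⟩
          · dsimp only
            by_cases hk : k = j
            · rw [if_pos hk]; subst hk; exact hxQ k
            · rw [if_neg hk]; have := hmk k hk; omega
          · intro h
            have h2 := congrFun h k0
            rw [if_neg hk0j] at h2
            omega
          · dsimp only
            by_cases hk : k = j
            · rw [if_pos hk]; subst hk; omega
            · rw [if_neg hk]; exact hmx k
          · dsimp only
            by_cases hk : k = j
            · rw [if_pos hk]; subst hk
              have hx0 := h1 k0
              have := stepTo_cases (x k) (y k); omega
            · rw [if_neg hk]; exact hmy k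
    · -- x ∈ spike i, y ∈ spike j
      refine ⟨fun k => stepTo (x k) (y k), ?_, hmne, hmx, hmy⟩
      by_cases hij : i = j
      · subst hij
        right
        refine ⟨i, (stepTo (x i) (y i)).toNat, ?_, ?_, fun k hk => ?_⟩
        · have := stepTo_cases (x i) (y i); omega
        · have := stepTo_cases (x i) (y i); dsimp only; omega
        · have hc1 := stepTo_cases (x i) (y i); have hc2 := stepTo_cases (x k) (y k)
          have := hxk k hk; have := hyk k hk
          dsimp only; omega
      · have hji : j ≠ i := fun h => hij h.symm
        have hyi : B - (s:ℤ) ≤ y i ∧ y i ≤ B + s := hyk i hij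
        have hxj : B - (r:ℤ) ≤ x j ∧ x j ≤ B + r := hxk j hji
        have hci := stepTo_cases (x i) (y i)
        have hcj := stepTo_cases (x j) (y j)
        by_cases hcase : (r : ℤ) + 1 < A
        · right
          refine ⟨i, r + 1, by push_cast; omega, ?_, fun k hk => ?_⟩
          · dsimp only; push_cast; omega
          · have := hmx k; have := hxk k hk; dsimp only; push_cast; omega
        · by_cases hmj2 : A ≤ stepTo (x j) (y j)
          · left; intro k
            dsimp only
            by_cases hki : k = i
            · subst hki; omega
            · by_cases hkj : k = j
              · subst hkj; omega
              · have := stepTo_cases (x k) (y k)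
                have := hxk k hki; have := hyk k hkj; omega
          · right
            refine ⟨j, (A - 1).toNat, ?_, ?_, fun k hk => ?_⟩
            · omega
            · dsimp only; omega
            · dsimp only
              by_cases hki : k = i
              · subst hki; omega
              · have := stepTo_cases (x k) (y k)
                have := hxk k hki; have := hyk k hk; omega

lemma adj_natAbs {D β : ℕ} {x y : Vtx D β} (h : (maxGraph D β).Adj x y) :
    ∀ k, (x.1 k - y.1 k).natAbs ≤ 1 := by
  rw [maxGraph, SimpleGraph.fromRel_adj] at h
  intro k
  rcases h.2 with h2 | h2 <;> have := h2 k <;> rw [abs_le] at this <;> omega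

lemma walk_lower {D β : ℕ} {x y : Vtx D β} (p : (maxGraph D β).Walk x y) :
    ∀ k, (x.1 k - y.1 k).natAbs ≤ p.length := by
  induction p with
  | nil => intro k; simp
  | cons h p ih =>
    intro k
    have h1 := adj_natAbs h k
    have h2 := ih k
    simp only [SimpleGraph.Walk.length_cons]
    omega

lemma walk_upper (D β : ℕ) (hD : 2 ≤ D) :
    ∀ (n : ℕ) (x y : Vtx D β), (∀ k, (x.1 k - y.1 k).natAbs ≤ n) →
      ∃ p : (maxGraph D β).Walk x y, p.length ≤ n := by
  intro n
  induction n with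
  | zero =>
    intro x y h
    have : x = y := by
      apply Subtype.ext; funext k; have := h k; omega
    subst this
    exact ⟨SimpleGraph.Walk.nil, by simp⟩
  | succ n ih =>
    intro x y h
    by_cases hxy : x = y
    · subst hxy; exact ⟨SimpleGraph.Walk.nil, by simp⟩
    · have hne : x.1 ≠ y.1 := fun h' => hxy (Subtype.ext h')
      obtain ⟨z, hzV, hzx, hz1, hz2⟩ :=
        key D β hD x.1 y.1 x.2 y.2 (n + 1) h hne (by omega)
      obtain ⟨p, hp⟩ := ih ⟨z, hzV⟩ y (fun k => by
        show (z k - y.1 k).natAbs ≤ n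
        have := hz2 k; omega)
      have hadj : (maxGraph D β).Adj x ⟨z, hzV⟩ := by
        refine (SimpleGraph.fromRel_adj ..).2 ?_
        refine ⟨fun h' => hzx (congrArg Subtype.val h').symm, Or.inr fun i => ?_⟩
        show |z i - x.1 i| ≤ 1
        rw [abs_le]
        have := hz1 i
        omega
      exact ⟨SimpleGraph.Walk.cons hadj p, by have := SimpleGraph.Walk.length_cons hadj p; omega⟩

theorem maxGraph_dist (D β : ℕ) (hD : 2 ≤ D) (hβ : 1 ≤ β) (x y : Vtx D β) :
    (maxGraph D β).dist x y = Finset.univ.sup (fun i => (x.1 i - y.1 i).natAbs) := by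
  obtain ⟨p, hp⟩ := walk_upper D β hD (Finset.univ.sup (fun i => (x.1 i - y.1 i).natAbs)) x y
    (fun k => Finset.le_sup (f := fun i => (x.1 i - y.1 i).natAbs) (Finset.mem_univ k))
  apply le_antisymm
  · exact le_trans (SimpleGraph.dist_le p) hp
  · obtain ⟨q, hq⟩ := SimpleGraph.Reachable.exists_walk_length_eq_dist ⟨p⟩
    apply Finset.sup_le
    intro k _
    have := walk_lower q k
    omega
end
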